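/- Let V be a finite-dimensional vector space over K = GF(2) and f : V → V a nilpotent K-linear endomorphism. Suppose λ^R and λ^S are unrepeated elementary divisors of f (d(f,R) = d(f,S) = 1) with R + 1 < S, and let u and v be generators of V with e(u) = R and e(v) = S. If the integers s, q satisfy 0 < s ≤ R, s < q, and R − s < S − q, then the subspace X = ⟨f^{R−s}(u) + f^{S−q}(v)⟩^c is characteristic and not hyperinvariant. -/

import Mathlib

open Module LinearMap

section Defs

variable {K V : Type*} [Field K] [AddCommGroup V] [Module K V]

/-- `α` commutes with `f`. -/
def Commutes (f : V →ₗ[K] V) (α : V ≃ₗ[K] V) : Prop :=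
  ∀ v, α (f v) = f (α v)

/-- `X` is hyperinvariant: invariant under every endomorphism commuting with `f`. -/
def Hyperinv (f : V →ₗ[K] V) (X : Submodule K V) : Prop :=
  ∀ g : V →ₗ[K] V, (∀ v, g (f v) = f (g v)) → ∀ x ∈ X, g x ∈ X

/-- `X` is characteristic: `f`-invariant and invariant under every automorphism
commuting with `f`. -/
def Charinv (f : V →ₗ[K] V) (X : Submodule K V) : Prop :=
  (∀ x ∈ X, f x ∈ X) ∧ ∀ α : V ≃ₗ[K] V, Commutes f α → ∀ x ∈ X, α x ∈ X

/-- The characteristic hull of a set `B`: the subspace spanned by all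
`f^i (α b)`, `b ∈ B`, `α` an automorphism commuting with `f`. -/
def charHull (f : V →ₗ[K] V) (B : Set V) : Submodule K V :=
  Submodule.span K
    {y | ∃ b ∈ B, ∃ i : ℕ, ∃ α : V ≃ₗ[K] V, Commutes f α ∧ y = (f ^ i) (α b)}

/-- The `f`-cyclic subspace generated by `x`. -/
def cyc (f : V →ₗ[K] V) (x : V) : Submodule K V :=
  Submodule.span K (Set.range fun i : ℕ => (f ^ i) x)

/-- The `f`-invariant span of a set `B`. -/
def invSpan (f : V →ₗ[K] V) (B : Set V) : Submodule K V :=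
  Submodule.span K {y | ∃ b ∈ B, ∃ i : ℕ, y = (f ^ i) b}

/-- The exponent of `x`: the least `ℓ` with `f^ℓ x = 0`. -/
noncomputable def expnt (f : V →ₗ[K] V) (x : V) : ℕ :=
  sInf {ℓ : ℕ | (f ^ ℓ) x = 0}

/-- The height of `x`: the largest `q` with `x ∈ f^q V`. -/
noncomputable def hgt (f : V →ₗ[K] V) (x : V) : ℕ :=
  sSup {q : ℕ | x ∈ LinearMap.range (f ^ q)}

/-- `u` is a generator of `V`: `V = ⟨u⟩ ⊕ V₂` for some `f`-invariant `V₂`. -/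
def IsGenerator (f : V →ₗ[K] V) (u : V) : Prop :=
  u ≠ 0 ∧ ∃ V₂ : Submodule K V, (∀ x ∈ V₂, f x ∈ V₂) ∧ IsCompl (cyc f u) V₂

/-- `(u 0, …, u (m-1))` is a generator tuple of `V`:
`V = ⟨u 0⟩ ⊕ ⋯ ⊕ ⟨u (m-1)⟩` with nondecreasing exponents. -/
def IsGenTuple {m : ℕ} (f : V →ₗ[K] V) (u : Fin m → V) : Prop :=
  DirectSum.IsInternal (fun i => cyc f (u i)) ∧ Monotone fun i => expnt f (u i)

/-- The Ulm invariant `d(f,r) = dim ((ker f ⊓ f^{r-1} V) / (ker f ⊓ f^r V))`. -/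
noncomputable def ulm (f : V →ₗ[K] V) (r : ℕ) : ℕ :=
  Module.finrank K
    (↥(LinearMap.ker f ⊓ LinearMap.range (f ^ (r - 1))) ⧸
      Submodule.comap (LinearMap.ker f ⊓ LinearMap.range (f ^ (r - 1))).subtype
        (LinearMap.ker f ⊓ LinearMap.range (f ^ r)))

/-- The largest hyperinvariant subspace contained in `X`
(the sum of all hyperinvariant subspaces contained in `X`). -/
noncomputable def largestHyperinv (f : V →ₗ[K] V) (X : Submodule K V) : Submodule K V :=
  sSup {W : Submodule K V | Hyperinv f W ∧ W ≤ X}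

end Defs

namespace CharHyp

variable {K V : Type*} [Field K] [AddCommGroup V] [Module K V]

lemma powAdd (f : V →ₗ[K] V) (a b : ℕ) (x : V) :
    (f ^ (a + b)) x = (f ^ a) ((f ^ b) x) := by
  rw [pow_add, Module.End.mul_apply]

lemma powZeroOfLe {f : V →ₗ[K] V} {x : V} {n m : ℕ} (h : n ≤ m)
    (hx : (f ^ n) x = 0) : (f ^ m) x = 0 := by
  obtain ⟨k, rfl⟩ := Nat.exists_eq_add_of_le h
  rw [add_comm n k, powAdd, hx, map_zero]

lemma comm_pow {f g : V →ₗ[K] V} (h : ∀ x, g (f x) = f (g x)) (i : ℕ) (x : V) :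
    g ((f ^ i) x) = (f ^ i) (g x) := by
  induction i generalizing x with
  | zero => simp
  | succ n ih =>
    rw [pow_succ, Module.End.mul_apply, Module.End.mul_apply, ih, h]

lemma equiv_comm_pow {f : V →ₗ[K] V} {α : V ≃ₗ[K] V} (h : ∀ x, α (f x) = f (α x))
    (i : ℕ) (x : V) : α ((f ^ i) x) = (f ^ i) (α x) := by
  induction i generalizing x with
  | zero => simp
  | succ n ih =>
    rw [pow_succ, Module.End.mul_apply, Module.End.mul_apply, ih, h]

lemma symm_comm {f : V →ₗ[K] V} {α : V ≃ₗ[K] V} (h : ∀ x, α (f x) = f (α x)) :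
    ∀ x, α.symm (f x) = f (α.symm x) := by
  intro x
  have := h (α.symm x)
  rw [α.apply_symm_apply] at this
  rw [← this, α.symm_apply_apply]

lemma expnt_apply_eq_zero (f : V →ₗ[K] V) (hf : IsNilpotent f) (x : V) :
    (f ^ expnt f x) x = 0 := by
  have hne : {ℓ : ℕ | (f ^ ℓ) x = 0}.Nonempty := by
    obtain ⟨n, hn⟩ := hf
    exact ⟨n, by simp [Set.mem_setOf_eq, hn]⟩
  exact Nat.sInf_mem hne

lemma expnt_apply_ne_zero (f : V →ₗ[K] V) (x : V) {n : ℕ} (h : n < expnt f x) :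
    (f ^ n) x ≠ 0 :=
  fun h0 => absurd (Nat.sInf_le h0) (not_le.mpr h)

lemma mem_cyc_self (f : V →ₗ[K] V) (x : V) : x ∈ cyc f x :=
  Submodule.subset_span ⟨0, by simp⟩

lemma pow_zero_of_cyc {f : V →ₗ[K] V} {x : V} {n : ℕ} (hx : (f ^ n) x = 0) :
    ∀ z ∈ cyc f x, (f ^ n) z = 0 := by
  intro z hz
  induction hz using Submodule.span_induction with
  | mem y hy =>
    obtain ⟨i, rfl⟩ := hy
    rw [← powAdd, add_comm, powAdd, hx, map_zero]
  | zero => simp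
  | add a b _ _ ha hb => rw [map_add, ha, hb, add_zero]
  | smul c a _ ha => rw [map_smul, ha, smul_zero]

lemma cyc_fstable {f : V →ₗ[K] V} {x : V} : ∀ z ∈ cyc f x, f z ∈ cyc f x := by
  intro z hz
  induction hz using Submodule.span_induction with
  | mem y hy =>
    obtain ⟨i, rfl⟩ := hy
    exact Submodule.subset_span ⟨i + 1, by simp only []; rw [pow_succ', Module.End.mul_apply]⟩
  | zero => simp
  | add a b _ _ ha hb => rw [map_add]; exact Submodule.add_mem _ ha hb
  | smul c a _ ha => rw [map_smul]; exact Submodule.smul_mem _ c ha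

/-- Bundled projection onto `cyc f x` commuting with `f`. -/
structure ProjData (f : V →ₗ[K] V) (x : V) (n : ℕ) where
  π : V →ₗ[K] V
  comm : ∀ y, π (f y) = f (π y)
  fix : ∀ z ∈ cyc f x, π z = z
  kill : ∀ y, (f ^ n) (π y) = 0
  mem : ∀ y, π y ∈ cyc f x

lemma ProjData.comm_pow' {f : V →ₗ[K] V} {x : V} {n : ℕ} (P : ProjData f x n)
    (i : ℕ) (y : V) : P.π ((f ^ i) y) = (f ^ i) (P.π y) :=
  comm_pow P.comm i y

noncomputable def projData_of_isGenerator {f : V →ₗ[K] V} {x : V} (hg : IsGenerator f x)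
    {n : ℕ} (hx : (f ^ n) x = 0) : ProjData f x n := by
  choose W hWf hcompl using hg.2
  refine ⟨(cyc f x).subtype ∘ₗ Submodule.projectionOnto _ W hcompl, ?_, ?_, ?_, ?_⟩
  · intro y
    have hdec := Submodule.projection_add_projection_eq_self hcompl y
    rw [Submodule.projection_apply, Submodule.projection_apply] at hdec
    set a : V := ((cyc f x).projectionOnto W hcompl y : V) with ha
    set b : V := (W.projectionOnto _ hcompl.symm y : V) with hb
    have hya : a ∈ cyc f x := Submodule.coe_mem _
    have hyb : b ∈ W := Submodule.coe_mem _
    have h1 : f y = f a + f b := by rw [← map_add, hdec]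
    have h2 : ∀ z ∈ cyc f x, ((cyc f x).subtype ∘ₗ Submodule.projectionOnto _ W hcompl) z = z := by
      intro z hz
      simp only [LinearMap.coe_comp, Function.comp_apply, Submodule.coe_subtype]
      rw [show z = ((⟨z, hz⟩ : cyc f x) : V) from rfl,
        Submodule.linearProjOfIsCompl_apply_left hcompl]
    have h3 : ∀ z ∈ W, ((cyc f x).subtype ∘ₗ Submodule.projectionOnto _ W hcompl) z = 0 := by
      intro z hz
      simp only [LinearMap.coe_comp, Function.comp_apply, Submodule.coe_subtype]
      rw [Submodule.projectionOnto_apply_of_mem_right (h := hcompl) hz]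
      rfl
    have hay : ((cyc f x).subtype ∘ₗ Submodule.projectionOnto _ W hcompl) y = a := by
      conv_lhs => rw [← hdec]
      rw [map_add, h2 a hya, h3 b hyb, add_zero]
    rw [h1, map_add, h2 _ (cyc_fstable a hya), h3 _ (hWf b hyb), add_zero, hay]
  · intro z hz
    simp only [LinearMap.coe_comp, Function.comp_apply, Submodule.coe_subtype]
    rw [show z = ((⟨z, hz⟩ : cyc f x) : V) from rfl,
      Submodule.linearProjOfIsCompl_apply_left hcompl]
  · intro y
    exact pow_zero_of_cyc hx _ (Submodule.coe_mem _)
  · intro y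
    exact Submodule.coe_mem _

lemma notr {f : V →ₗ[K] V} {x : V} {n : ℕ} (P : ProjData f x n)
    (hn1 : (f ^ (n - 1)) x ≠ 0) : (f ^ (n - 1)) x ∉ LinearMap.range (f ^ n) := by
  rintro ⟨y, hy⟩
  have h1 : P.π ((f ^ n) y) = 0 := by rw [P.comm_pow']; exact P.kill y
  have h2 : P.π ((f ^ (n - 1)) x) = (f ^ (n - 1)) x :=
    P.fix _ (Submodule.subset_span ⟨n - 1, rfl⟩)
  refine hn1 ?_
  rw [← h2, ← hy]
  exact h1

lemma ulm_decomp {f : V →ₗ[K] V} {x : V} {n : ℕ}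
    (hx : f ((f ^ (n - 1)) x) = 0) (hnr : (f ^ (n - 1)) x ∉ LinearMap.range (f ^ n))
    (hd : ulm f n = 1) :
    ∀ z, f z = 0 → z ∈ LinearMap.range (f ^ (n - 1)) →
      ∃ (c : K) (y : V), z = c • (f ^ (n - 1)) x + (f ^ n) y ∧ f ((f ^ n) y) = 0 := by
  intro z hz1 hz2
  set N : Submodule K V := LinearMap.ker f ⊓ LinearMap.range (f ^ (n - 1)) with hN
  set M : Submodule K ↥N :=
    Submodule.comap N.subtype (LinearMap.ker f ⊓ LinearMap.range (f ^ n)) with hM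
  have hxN : (f ^ (n - 1)) x ∈ N := ⟨hx, ⟨x, rfl⟩⟩
  set ξ : ↥N ⧸ M := Submodule.Quotient.mk (⟨(f ^ (n - 1)) x, hxN⟩ : N) with hξ
  have hξne : ξ ≠ 0 := by
    intro h0
    have := (Submodule.Quotient.mk_eq_zero M).mp h0
    exact hnr this.2
  have hspan := (finrank_eq_one_iff_of_nonzero' ξ hξne).mp hd
  obtain ⟨c, hc⟩ := hspan (Submodule.Quotient.mk (⟨z, hz1, hz2⟩ : N))
  rw [← Submodule.Quotient.mk_smul, Submodule.Quotient.eq] at hc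
  have hc' := Submodule.mem_comap.mp hc
  have hwq : (N.subtype) (c • (⟨(f ^ (n - 1)) x, hxN⟩ : N) - ⟨z, hz1, hz2⟩)
      = c • (f ^ (n - 1)) x - z := by simp
  rw [hwq] at hc'
  obtain ⟨hm1, ym, hym⟩ := hc'
  refine ⟨c, -ym, ?_, ?_⟩
  · rw [map_neg, hym]; abel
  · rw [map_neg, hym, map_neg, LinearMap.mem_ker.mp hm1, neg_zero]

lemma zmod2_cases (c : ZMod 2) (h : c ≠ 0) : c = 1 := by revert c; decide

lemma coef_zero {f : V →ₗ[K] V} {v : V} {S : ℕ} (hS : (f ^ S) v = 0)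
    (hS1 : (f ^ (S - 1)) v ≠ 0) (c : ℕ →₀ K) (a : ℕ)
    (hsum : (c.sum fun j t => t • (f ^ (j + a)) v) = 0) :
    ∀ j, j + a < S → c j = 0 := by
  intro j
  induction j using Nat.strong_induction_on with
  | _ j ih =>
    intro hj
    set m := S - 1 - j - a with hm
    have h0 : ∀ b ∈ c.support, b ≠ j → (f ^ m) (c b • (f ^ (b + a)) v) = 0 := by
      intro b _ hbj
      rcases lt_or_gt_of_ne hbj with hblt | hbgt
      · rw [ih b hblt (by omega), zero_smul, map_zero]
      · rw [map_smul, ← powAdd, powZeroOfLe (show S ≤ m + (b + a) by omega) hS,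
          smul_zero]
    have h1 : j ∉ c.support → (f ^ m) (c j • (f ^ (j + a)) v) = 0 := by
      intro hj'
      rw [Finsupp.notMem_support_iff.mp hj', zero_smul, map_zero]
    have hkey : (f ^ m) (c.sum fun i t => t • (f ^ (i + a)) v)
        = (f ^ m) (c j • (f ^ (j + a)) v) := by
      rw [map_finsuppSum, Finsupp.sum]
      exact Finset.sum_eq_single j h0 h1
    rw [hsum, map_zero] at hkey
    rw [map_smul, ← powAdd, show m + (j + a) = S - 1 by omega] at hkey
    rcases smul_eq_zero.mp hkey.symm with h | h
    · exact h
    · exact absurd h hS1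

lemma ht_mem_range {f : V →ₗ[K] V} {v : V} {S : ℕ} (hS : (f ^ S) v = 0)
    (hS1 : (f ^ (S - 1)) v ≠ 0) {z : V} (hz : z ∈ cyc f v) {a : ℕ} (ha : (f ^ a) z = 0)
    (haS : a ≤ S) : ∃ y, z = (f ^ (S - a)) y := by
  obtain ⟨c, hc⟩ := Finsupp.mem_span_range_iff_exists_finsupp.mp hz
  have hzero : (c.sum fun j t => t • (f ^ (j + a)) v) = 0 := by
    rw [← ha, ← hc, map_finsuppSum]
    refine Finsupp.sum_congr fun j _ => ?_
    rw [map_smul, ← powAdd, add_comm j a]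
  have hcoef := coef_zero hS hS1 c a hzero
  refine ⟨c.sum fun j t => t • (f ^ (j - (S - a))) v, ?_⟩
  rw [← hc, map_finsuppSum]
  refine Finsupp.sum_congr fun j hj => ?_
  have hj' : ¬ (j + a < S) := fun hcon => (Finsupp.mem_support_iff.mp hj) (hcoef j hcon)
  rw [map_smul, ← powAdd, show S - a + (j - (S - a)) = j by omega]

lemma inf_stable {f : V →ₗ[K] V} (a b i : ℕ) {z : V}
    (hz : z ∈ LinearMap.ker (f ^ a) ⊓ LinearMap.range (f ^ b)) :
    (f ^ i) z ∈ LinearMap.ker (f ^ a) ⊓ LinearMap.range (f ^ b) := by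
  obtain ⟨h1, h2⟩ := Submodule.mem_inf.mp hz
  obtain ⟨y, hy⟩ := h2
  refine Submodule.mem_inf.mpr ⟨?_, ⟨(f ^ i) y, by rw [← powAdd, add_comm, powAdd, hy]⟩⟩
  rw [LinearMap.mem_ker, ← powAdd, add_comm, powAdd, LinearMap.mem_ker.mp h1, map_zero]

lemma proj_pow_range_zero {f : V →ₗ[K] V} {x : V} {n : ℕ} (P : ProjData f x n)
    {m b : ℕ} (h : n ≤ m + b) :
    ∀ z ∈ LinearMap.range (f ^ b), (f ^ m) (P.π z) = 0 := by
  rintro z ⟨y, rfl⟩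
  rw [P.comm_pow', ← powAdd]
  exact powZeroOfLe (by omega) (P.kill y)

lemma proj_pow_ker_zero {f : V →ₗ[K] V} {x : V} {n : ℕ} (P : ProjData f x n)
    {m a : ℕ} (h : a ≤ m) :
    ∀ z, (f ^ a) z = 0 → (f ^ m) (P.π z) = 0 := by
  intro z hz
  rw [← P.comm_pow', powZeroOfLe h hz, map_zero]

end CharHyp

namespace CharHyp

variable {V : Type*} [AddCommGroup V] [Module (ZMod 2) V]

lemma main_decomp (f : V →ₗ[ZMod 2] V) {x : V} {n : ℕ} (P : ProjData f x n)
    (hn : 1 ≤ n) (hxn : (f ^ n) x = 0) (hn1 : (f ^ (n - 1)) x ≠ 0) (hd : ulm f n = 1)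
    (α : V ≃ₗ[ZMod 2] V) (hα : Commutes f α) :
    ∃ k y, α x - x = k + f y ∧ (f ^ (n - 1)) k = 0 ∧ f ((f ^ n) y) = 0 := by
  have hpow : ∀ w : V, f ((f ^ (n - 1)) w) = (f ^ n) w := by
    intro w
    have h := powAdd f 1 (n - 1) w
    rw [show 1 + (n - 1) = n by omega] at h
    rw [h, pow_one]
  have hker : f ((f ^ (n - 1)) (α x)) = 0 := by
    rw [hpow, ← equiv_comm_pow hα, hxn, map_zero]
  obtain ⟨c, y, hcy, hfy⟩ := ulm_decomp (hpow x ▸ hxn) (notr P hn1) hd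
    ((f ^ (n - 1)) (α x)) hker ⟨α x, rfl⟩
  have hc : c = 1 := by
    refine zmod2_cases c fun h0 => ?_
    rw [h0, zero_smul, zero_add] at hcy
    refine notr P hn1 ⟨α.symm y, ?_⟩
    rw [← equiv_comm_pow (symm_comm hα), ← hcy, equiv_comm_pow (symm_comm hα), α.symm_apply_apply]
  subst hc
  rw [one_smul] at hcy
  refine ⟨α x - x - f y, y, by abel, ?_, hfy⟩
  have h2 : (f ^ (n - 1)) (f y) = (f ^ n) y := by
    rw [← comm_pow (fun _ => rfl) (n - 1) y, hpow]
  rw [map_sub, map_sub, hcy, h2]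
  abel

lemma main_E (f : V →ₗ[ZMod 2] V) {x : V} {n : ℕ} (P : ProjData f x n)
    (hn : 1 ≤ n) (hxn : (f ^ n) x = 0) (hn1 : (f ^ (n - 1)) x ≠ 0) (hd : ulm f n = 1)
    (α : V ≃ₗ[ZMod 2] V) (hα : Commutes f α) (s : ℕ) (hs : 1 ≤ s) (hsn : s ≤ n) :
    (f ^ (n - s)) (α x) - (f ^ (n - s)) x ∈
      (LinearMap.ker (f ^ (s - 1)) ⊓ LinearMap.range (f ^ (n - s))) ⊔
        (LinearMap.ker (f ^ s) ⊓ LinearMap.range (f ^ (n - s + 1))) := by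
  obtain ⟨k, y, hky, hk, hy⟩ := main_decomp f P hn hxn hn1 hd α hα
  have hsplit : (f ^ (n - s)) (α x) - (f ^ (n - s)) x
      = (f ^ (n - s)) k + (f ^ (n - s + 1)) y := by
    have h := powAdd f 1 (n - s) y
    rw [show 1 + (n - s) = n - s + 1 by omega] at h
    rw [← map_sub, hky, map_add, h, pow_one, comm_pow (fun _ => rfl) (n - s) y]
  rw [hsplit]
  refine Submodule.add_mem _ (Submodule.mem_sup_left ⟨?_, ⟨k, rfl⟩⟩)
    (Submodule.mem_sup_right ⟨?_, ⟨y, rfl⟩⟩)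
  · show (f ^ (s - 1)) ((f ^ (n - s)) k) = 0
    rw [← powAdd, show s - 1 + (n - s) = n - 1 by omega, hk]
  · show (f ^ s) ((f ^ (n - s + 1)) y) = 0
    rw [← powAdd, show s + (n - s + 1) = 1 + n by omega, powAdd, pow_one, hy]

end CharHyp

theorem stmt1 (V : Type*) [AddCommGroup V] [Module (ZMod 2) V]
    [FiniteDimensional (ZMod 2) V] (f : V →ₗ[ZMod 2] V) (hf : IsNilpotent f)
    (R S : ℕ) (hRS : R + 1 < S) (hdR : ulm f R = 1) (hdS : ulm f S = 1)
    (u v : V) (hu : IsGenerator f u) (hv : IsGenerator f v)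
    (heu : expnt f u = R) (hev : expnt f v = S)
    (s q : ℕ) (hs0 : 0 < s) (hsR : s ≤ R) (hsq : s < q)
    (hlt : (R : ℤ) - s < (S : ℤ) - q) :
    Charinv f (charHull f {(f ^ (R - s)) u + (f ^ (S - q)) v}) ∧
      ¬ Hyperinv f (charHull f {(f ^ (R - s)) u + (f ^ (S - q)) v}) := by
  classical
  open CharHyp in
  set w : V := (f ^ (R - s)) u + (f ^ (S - q)) v with hw
  have hqS : q < S := by omega
  have hq1 : 1 ≤ q := by omega
  have hR1 : 1 ≤ R := by omega
  have hBA : R - s + 1 ≤ S - q := by omega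
  have hfu : (f ^ R) u = 0 := by rw [← heu]; exact expnt_apply_eq_zero f hf u
  have hfv : (f ^ S) v = 0 := by rw [← hev]; exact expnt_apply_eq_zero f hf v
  have hfu1 : (f ^ (R - 1)) u ≠ 0 := expnt_apply_ne_zero f u (by omega)
  have hfv1 : (f ^ (S - 1)) v ≠ 0 := expnt_apply_ne_zero f v (by omega)
  -- the big subspace E
  set E1 : Submodule (ZMod 2) V :=
    LinearMap.ker (f ^ (s - 1)) ⊓ LinearMap.range (f ^ (R - s)) with hE1
  set E2 : Submodule (ZMod 2) V :=
    LinearMap.ker (f ^ s) ⊓ LinearMap.range (f ^ (R - s + 1)) with hE2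
  set E3 : Submodule (ZMod 2) V :=
    LinearMap.ker (f ^ (q - 1)) ⊓ LinearMap.range (f ^ (S - q)) with hE3
  set E4 : Submodule (ZMod 2) V :=
    LinearMap.ker (f ^ q) ⊓ LinearMap.range (f ^ (S - q + 1)) with hE4
  set E : Submodule (ZMod 2) V := E1 ⊔ E2 ⊔ E3 ⊔ E4 with hE
  constructor
  · -- Charinv
    constructor
    · intro x hx
      simp only [charHull] at hx ⊢
      induction hx using Submodule.span_induction with
      | mem y hy =>
        obtain ⟨b, hb, i, α, hα, rfl⟩ := hy
        refine Submodule.subset_span ⟨b, hb, i + 1, α, hα, ?_⟩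
        rw [pow_succ', Module.End.mul_apply]
      | zero => simp
      | add a b _ _ ha hb => rw [map_add]; exact Submodule.add_mem _ ha hb
      | smul t a _ ha => rw [map_smul]; exact Submodule.smul_mem _ _ ha
    · intro β hβ x hx
      simp only [charHull] at hx ⊢
      induction hx using Submodule.span_induction with
      | mem y hy =>
        obtain ⟨b, hb, i, α, hα, rfl⟩ := hy
        refine Submodule.subset_span ⟨b, hb, i, α.trans β, fun z => ?_, ?_⟩
        · show β (α (f z)) = f (β (α z))
          rw [hα, hβ]
        · rw [equiv_comm_pow hβ]
          rfl
      | zero => simp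
      | add a b _ _ ha hb => rw [map_add]; exact Submodule.add_mem _ ha hb
      | smul t a _ ha => rw [map_smul]; exact Submodule.smul_mem _ _ ha
  · -- not Hyperinv
    intro hHyp
    obtain ⟨Pu⟩ : Nonempty (ProjData f u R) := ⟨projData_of_isGenerator hu hfu⟩
    obtain ⟨Pv⟩ : Nonempty (ProjData f v S) := ⟨projData_of_isGenerator hv hfv⟩
    have hwX : w ∈ charHull f {w} := by
      refine Submodule.subset_span ⟨w, rfl, 0, LinearEquiv.refl _ _, fun z => rfl, ?_⟩
      simp
    have hπvX : Pv.π w ∈ charHull f {w} := hHyp Pv.π Pv.comm w hwX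
    -- E is stable under powers of f
    have hEf : ∀ i, ∀ z ∈ E, (f ^ i) z ∈ E := by
      intro i
      have : E ≤ Submodule.comap (f ^ i) E := by
        refine sup_le (sup_le (sup_le ?_ ?_) ?_) ?_ <;> intro z hz
        · exact Submodule.mem_sup_left
            (Submodule.mem_sup_left (Submodule.mem_sup_left (inf_stable _ _ i hz)))
        · exact Submodule.mem_sup_left
            (Submodule.mem_sup_left (Submodule.mem_sup_right (inf_stable _ _ i hz)))
        · exact Submodule.mem_sup_left (Submodule.mem_sup_right (inf_stable _ _ i hz))
        · exact Submodule.mem_sup_right (inf_stable _ _ i hz)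
      exact fun z hz => this hz
    -- X ⊆ invSpan {w} ⊔ E
    have hXY : charHull f {w} ≤ invSpan f {w} ⊔ E := by
      simp only [charHull]
      refine Submodule.span_le.mpr ?_
      rintro y ⟨b, hb, i, α, hα, rfl⟩
      rcases Set.mem_singleton_iff.mp hb with rfl
      have hαwE : α w - w ∈ E := by
        have h1 := main_E f Pu hR1 hfu hfu1 hdR α hα s hs0 hsR
        have h2 := main_E f Pv (by omega) hfv hfv1 hdS α hα q hq1 (le_of_lt hqS)
        have hdec : α w - w = ((f ^ (R - s)) (α u) - (f ^ (R - s)) u)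
            + ((f ^ (S - q)) (α v) - (f ^ (S - q)) v) := by
          rw [hw, map_add, equiv_comm_pow hα, equiv_comm_pow hα]
          abel
        rw [hdec]
        refine Submodule.add_mem _ ?_ ?_
        · exact Submodule.mem_sup_left (Submodule.mem_sup_left h1)
        · obtain ⟨z3, hz3, z4, hz4, hzz⟩ := Submodule.mem_sup.mp h2
          rw [← hzz]
          exact Submodule.add_mem _
            (Submodule.mem_sup_left (Submodule.mem_sup_right hz3))
            (Submodule.mem_sup_right hz4)
      have hsplit : (f ^ i) (α w) = (f ^ i) w + (f ^ i) (α w - w) := by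
        rw [← map_add]
        congr 1
        abel
      rw [hsplit]
      exact Submodule.add_mem _
        (Submodule.mem_sup_left (Submodule.subset_span ⟨w, rfl, i, rfl⟩))
        (Submodule.mem_sup_right (hEf i _ hαwE))
    obtain ⟨Pw, hPw, e, he, hsum⟩ := Submodule.mem_sup.mp (hXY hπvX)
    -- Pw as a finsupp combination
    have hsetEq : {y | ∃ b ∈ ({w} : Set V), ∃ i : ℕ, y = (f ^ i) b}
        = Set.range (fun i : ℕ => (f ^ i) w) := by
      ext y
      constructor
      · rintro ⟨b, hb, i, rfl⟩
        rcases Set.mem_singleton_iff.mp hb with rfl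
        exact ⟨i, rfl⟩
      · rintro ⟨i, rfl⟩
        exact ⟨w, rfl, i, rfl⟩
    rw [invSpan, hsetEq] at hPw
    obtain ⟨c, hc⟩ := Finsupp.mem_span_range_iff_exists_finsupp.mp hPw
    -- key computations
    have hπvu : (f ^ R) (Pv.π u) = 0 := by rw [← Pv.comm_pow', hfu, map_zero]
    have hπvw : Pv.π w = (f ^ (R - s)) (Pv.π u) + (f ^ (S - q)) v := by
      rw [hw, map_add, Pv.comm_pow', Pv.comm_pow', Pv.fix v (mem_cyc_self f v)]
    -- term computation for the v-test
    have htermv : ∀ i : ℕ, (f ^ (q - 1)) (Pv.π ((f ^ i) w))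
        = if i = 0 then (f ^ (S - 1)) v else 0 := by
      intro i
      rw [Pv.comm_pow' i w, ← powAdd, hπvw, map_add, ← powAdd, ← powAdd,
        powZeroOfLe (show R ≤ q - 1 + i + (R - s) by omega) hπvu, zero_add]
      by_cases hi : i = 0
      · subst hi
        rw [if_pos rfl, show q - 1 + 0 + (S - q) = S - 1 by omega]
      · rw [if_neg hi, powZeroOfLe (show S ≤ q - 1 + i + (S - q) by omega) hfv]
    have hTv : ∀ z ∈ E, (f ^ (q - 1)) (Pv.π z) = 0 := by
      have hle : E ≤ LinearMap.ker ((f ^ (q - 1)) ∘ₗ Pv.π) := by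
        refine sup_le (sup_le (sup_le ?_ ?_) ?_) ?_ <;> intro z hz <;>
          obtain ⟨hk, hr⟩ := Submodule.mem_inf.mp hz <;>
          rw [LinearMap.mem_ker, LinearMap.comp_apply]
        · exact proj_pow_ker_zero Pv (by omega) z (LinearMap.mem_ker.mp hk)
        · exact proj_pow_ker_zero Pv (by omega) z (LinearMap.mem_ker.mp hk)
        · exact proj_pow_ker_zero Pv (le_refl _) z (LinearMap.mem_ker.mp hk)
        · exact proj_pow_range_zero Pv (by omega) z hr
      intro z hz
      exact LinearMap.mem_ker.mp (hle hz)
    have hPwv : (f ^ (q - 1)) (Pv.π Pw) = c 0 • (f ^ (S - 1)) v := by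
      rw [← hc, map_finsuppSum, map_finsuppSum, Finsupp.sum]
      rw [Finset.sum_eq_single 0
        (fun b _ hb => by rw [map_smul, map_smul, htermv b, if_neg hb, smul_zero])
        (fun h0 => by rw [Finsupp.notMem_support_iff.mp h0, zero_smul, map_zero, map_zero])]
      rw [map_smul, map_smul, htermv 0, if_pos rfl]
    have hππv : Pv.π (Pv.π w) = Pv.π w := Pv.fix _ (Pv.mem w)
    have hv0 : (f ^ (q - 1)) (Pv.π w) = (f ^ (S - 1)) v := by
      have := htermv 0
      rw [if_pos rfl] at this
      simpa using this
    have heqv : c 0 • (f ^ (S - 1)) v + (f ^ (q - 1)) (Pv.π e) = (f ^ (S - 1)) v := by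
      rw [← hPwv, ← map_add, ← map_add, hsum, hππv, hv0]
    rw [hTv e he, add_zero] at heqv
    have hc0 : c 0 = 1 := by
      have hz : (c 0 - 1) • (f ^ (S - 1)) v = 0 := by
        rw [sub_smul, one_smul, heqv, sub_self]
      rcases smul_eq_zero.mp hz with h | h
      · exact sub_eq_zero.mp h
      · exact absurd h hfv1
    -- u-test
    have hπue0 : ∀ z ∈ E, (f ^ (s - 1)) (Pu.π z) = 0 := by
      have hle : E ≤ LinearMap.ker ((f ^ (s - 1)) ∘ₗ Pu.π) := by
        refine sup_le (sup_le (sup_le ?_ ?_) ?_) ?_ <;> intro z hz <;>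
          obtain ⟨hk, hr⟩ := Submodule.mem_inf.mp hz <;>
          rw [LinearMap.mem_ker, LinearMap.comp_apply]
        · exact proj_pow_ker_zero Pu (le_refl _) z (LinearMap.mem_ker.mp hk)
        · exact proj_pow_range_zero Pu (by omega) z hr
        · exact proj_pow_range_zero Pu (by omega) z hr
        · exact proj_pow_range_zero Pu (by omega) z hr
      intro z hz
      exact LinearMap.mem_ker.mp (hle hz)
    have hπuw : Pu.π w = (f ^ (R - s)) u + (f ^ (S - q)) (Pu.π v) := by
      rw [hw, map_add, Pu.comm_pow', Pu.comm_pow', Pu.fix u (mem_cyc_self f u)]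
    have htermu : ∀ i : ℕ, (f ^ (s - 1)) (Pu.π ((f ^ i) w))
        = if i = 0 then (f ^ (R - 1)) u else 0 := by
      intro i
      rw [Pu.comm_pow' i w, ← powAdd, hπuw, map_add, ← powAdd, ← powAdd,
        powZeroOfLe (show R ≤ s - 1 + i + (S - q) by omega) (Pu.kill v), add_zero]
      by_cases hi : i = 0
      · subst hi
        rw [if_pos rfl, show s - 1 + 0 + (R - s) = R - 1 by omega]
      · rw [if_neg hi, powZeroOfLe (show R ≤ s - 1 + i + (R - s) by omega) hfu]
    have hPwu : (f ^ (s - 1)) (Pu.π Pw) = c 0 • (f ^ (R - 1)) u := by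
      rw [← hc, map_finsuppSum, map_finsuppSum, Finsupp.sum]
      rw [Finset.sum_eq_single 0
        (fun b _ hb => by rw [map_smul, map_smul, htermu b, if_neg hb, smul_zero])
        (fun h0 => by rw [Finsupp.notMem_support_iff.mp h0, zero_smul, map_zero, map_zero])]
      rw [map_smul, map_smul, htermu 0, if_pos rfl]
    obtain ⟨y, hy⟩ := ht_mem_range hfv hfv1 (Pv.mem u) hπvu (by omega : R ≤ S)
    have hu0 : (f ^ (s - 1)) (Pu.π (Pv.π w)) = 0 := by
      rw [hπvw, hy, map_add, map_add, ← powAdd,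
        show R - s + (S - R) = S - s by omega, Pu.comm_pow', ← powAdd,
        powZeroOfLe (show R ≤ s - 1 + (S - s) by omega) (Pu.kill y),
        Pu.comm_pow', ← powAdd,
        powZeroOfLe (show R ≤ s - 1 + (S - q) by omega) (Pu.kill v), add_zero]
    have heq2 : c 0 • (f ^ (R - 1)) u + (f ^ (s - 1)) (Pu.π e) = 0 := by
      rw [← hPwu, ← map_add, ← map_add, hsum, hu0]
    rw [hπue0 e he, add_zero, hc0, one_smul] at heq2
    exact hfu1 heq2
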